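/- Fix an integer k ≥ 2 and a positive integer ν. Let J_{k,ν}(U) denote the number of 2ν-tuples (u₁, …, u_{2ν}) of integers with 1 ≤ u_i ≤ U satisfying 1/u₁^k + ⋯ + 1/u_ν^k = 1/u_{ν+1}^k + ⋯ + 1/u_{2ν}^k. Then for every ε > 0, J_{k,ν}(U) ≤ C(k,ν,ε) U^{ν+ε} for all U ≥ 1. -/

import Mathlib

open Finset Real

lemma pointwise_all {δ : ℝ} (hδ : 0 < δ) (p : ℕ) (hp : 2 ≤ p) (e : ℕ) :
    (e + 1 : ℝ) ≤ (1 + 1 / (δ * Real.log 2)) * (p : ℝ) ^ ((e : ℝ) * δ) := by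
  set c : ℝ := δ * Real.log 2 with hc
  have hc0 : 0 < c := mul_pos hδ (Real.log_pos (by norm_num))
  have h1 : (e + 1 : ℝ) ≤ (1 + 1 / c) * (1 + c * e) := by
    have h2 : (1 + 1 / c) * (1 + c * e) = 1 + c * e + 1/c + e := by
      field_simp; ring
    rw [h2]
    have : (0:ℝ) ≤ c * e := by positivity
    have : (0:ℝ) ≤ 1/c := by positivity
    linarith
  have h3 : (1 + c * e : ℝ) ≤ Real.exp (c * e) := by
    have := Real.add_one_le_exp (c * (e:ℝ)); linarith
  have h4 : Real.exp (c * e) = (2 : ℝ) ^ ((e:ℝ) * δ) := by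
    rw [Real.rpow_def_of_pos (by norm_num)]
    congr 1
    rw [hc]; ring
  have h5 : (2 : ℝ) ^ ((e:ℝ) * δ) ≤ (p : ℝ) ^ ((e:ℝ) * δ) := by
    apply Real.rpow_le_rpow (by norm_num) (by exact_mod_cast hp) (by positivity)
  have hK : (0:ℝ) ≤ 1 + 1/c := by positivity
  calc (e + 1 : ℝ) ≤ (1 + 1 / c) * (1 + c * e) := h1
    _ ≤ (1 + 1 / c) * Real.exp (c * e) := by nlinarith [Real.exp_pos (c*e)]
    _ = (1 + 1 / c) * (2 : ℝ) ^ ((e:ℝ) * δ) := by rw [h4]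
    _ ≤ (1 + 1 / c) * (p : ℝ) ^ ((e:ℝ) * δ) := by nlinarith [Real.rpow_pos_of_pos (show (0:ℝ) < 2 by norm_num) ((e:ℝ)*δ)]

lemma pointwise_big {δ : ℝ} (hδ : 0 < δ) (p : ℕ) (hp : 2 ≤ ((p:ℝ)) ^ δ) (e : ℕ) :
    (e + 1 : ℝ) ≤ (p : ℝ) ^ ((e : ℝ) * δ) := by
  have h1 : (e + 1 : ℝ) ≤ (2:ℝ) ^ e := by
    have := Nat.lt_two_pow_self (n := e)
    exact_mod_cast this
  have h2 : ((2:ℝ)) ^ e ≤ ((p:ℝ) ^ δ) ^ e :=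
    pow_le_pow_left₀ (by norm_num) hp e
  have h3 : ((p:ℝ) ^ δ) ^ e = (p : ℝ) ^ ((e : ℝ) * δ) := by
    rw [← Real.rpow_natCast ((p:ℝ) ^ δ) e, ← Real.rpow_mul (by positivity)]
    ring_nf
  linarith

lemma divisor_bound {δ : ℝ} (hδ : 0 < δ) :
    ∃ C : ℝ, 1 ≤ C ∧ ∀ n : ℕ, 1 ≤ n → ((n.divisors.card : ℝ)) ≤ C * (n : ℝ) ^ δ := by
  classical
  set K : ℝ := 1 + 1 / (δ * Real.log 2) with hK
  have hc0 : 0 < δ * Real.log 2 := mul_pos hδ (Real.log_pos (by norm_num))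
  have hK1 : 1 ≤ K := by
    have : 0 ≤ 1 / (δ * Real.log 2) := by positivity
    simp only [hK]; linarith
  set T : ℕ := ⌈(2:ℝ) ^ (1/δ)⌉₊ + 1 with hT
  refine ⟨K ^ T, one_le_pow₀ hK1, ?_⟩
  intro n hn
  have hn0 : n ≠ 0 := by omega
  set f := n.factorization with hf
  rw [Nat.card_divisors hn0]
  -- the prime factor set, split into small and big primes
  set P := n.primeFactors with hP
  set S := P.filter (fun p : ℕ => ((p:ℝ)) ^ δ < 2) with hS
  have hcast : ((P.prod (f · + 1) : ℕ) : ℝ) = ∏ p ∈ P, ((f p : ℝ) + 1) := by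
    push_cast; rfl
  have hnd : (n : ℝ) ^ δ = ∏ p ∈ P, (p:ℝ) ^ ((f p : ℝ) * δ) := by
    have h1 : (n : ℝ) = ∏ p ∈ P, ((p:ℝ)) ^ (f p) := by
      conv_lhs => rw [← Nat.factorization_prod_pow_eq_self hn0]
      rw [Nat.prod_factorization_eq_prod_primeFactors]
      push_cast; rfl
    rw [h1, ← Real.finset_prod_rpow _ _ (fun p _ => by positivity) δ]
    apply Finset.prod_congr rfl
    intro p hp
    rw [← Real.rpow_natCast (p:ℝ) (f p), ← Real.rpow_mul (by positivity)]
  have hprodpos : ∀ (Q : Finset ℕ), Q ⊆ P → (0:ℝ) < ∏ p ∈ Q, (p:ℝ) ^ ((f p : ℝ) * δ) := by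
    intro Q hQ
    apply Finset.prod_pos
    intro p hp
    have : p.Prime := Nat.prime_of_mem_primeFactors (hQ hp)
    apply Real.rpow_pos_of_pos
    exact_mod_cast this.pos
  -- pointwise bounds
  have hsmall : ∏ p ∈ S, ((f p : ℝ) + 1) ≤ K ^ S.card * ∏ p ∈ S, (p:ℝ) ^ ((f p : ℝ) * δ) := by
    rw [← Finset.prod_const, ← Finset.prod_mul_distrib]
    apply Finset.prod_le_prod (fun p _ => by positivity)
    intro p hp
    have hpP : p ∈ P := Finset.mem_filter.mp hp |>.1
    have hp2 : 2 ≤ p := (Nat.prime_of_mem_primeFactors hpP).two_le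
    exact pointwise_all hδ p hp2 (f p)
  have hbig : ∏ p ∈ P \ S, ((f p : ℝ) + 1) ≤ ∏ p ∈ P \ S, (p:ℝ) ^ ((f p : ℝ) * δ) := by
    apply Finset.prod_le_prod (fun p _ => by positivity)
    intro p hp
    obtain ⟨hpP, hpns⟩ := Finset.mem_sdiff.mp hp
    have h2 : 2 ≤ ((p:ℝ)) ^ δ := by
      by_contra h
      exact hpns (Finset.mem_filter.mpr ⟨hpP, by linarith⟩)
    simpa using pointwise_big hδ p h2 (f p)
  have hSP : S ⊆ P := by rw [hS]; exact Finset.filter_subset _ _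
  -- cardinality of S
  have hScard : S.card ≤ T := by
    have hsub : S ⊆ Finset.range T := by
      intro p hp
      obtain ⟨hpP, hplt⟩ := Finset.mem_filter.mp hp
      have hp0 : (0:ℝ) ≤ (p:ℝ) := by positivity
      have : ((p:ℝ) ^ δ) ^ (1/δ) < (2:ℝ) ^ (1/δ) :=
        Real.rpow_lt_rpow (by positivity) hplt (by positivity)
      rw [← Real.rpow_mul hp0, mul_one_div, div_self (ne_of_gt hδ), Real.rpow_one] at this
      have h2 : (p:ℝ) ≤ (⌈(2:ℝ) ^ (1/δ)⌉₊ : ℝ) := le_trans this.le (Nat.le_ceil _)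
      have : p < T := by
        rw [hT]
        have := Nat.cast_le (α := ℝ).mp h2
        omega
      exact Finset.mem_range.mpr this
    calc S.card ≤ (Finset.range T).card := Finset.card_le_card hsub
      _ = T := Finset.card_range T
  have hKS : K ^ S.card ≤ K ^ T := pow_le_pow_right₀ hK1 hScard
  calc ((P.prod (f · + 1) : ℕ) : ℝ) = ∏ p ∈ P, ((f p : ℝ) + 1) := hcast
    _ = (∏ p ∈ S, ((f p : ℝ) + 1)) * ∏ p ∈ P \ S, ((f p : ℝ) + 1) := by
        rw [mul_comm, Finset.prod_sdiff hSP]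
    _ ≤ (K ^ S.card * ∏ p ∈ S, (p:ℝ) ^ ((f p : ℝ) * δ)) * ∏ p ∈ P \ S, (p:ℝ) ^ ((f p : ℝ) * δ) := by
        apply mul_le_mul hsmall hbig (Finset.prod_nonneg fun p _ => by positivity)
        positivity
    _ = K ^ S.card * ((∏ p ∈ S, (p:ℝ) ^ ((f p : ℝ) * δ)) * ∏ p ∈ P \ S, (p:ℝ) ^ ((f p : ℝ) * δ)) := by
        ring
    _ = K ^ S.card * ∏ p ∈ P, (p:ℝ) ^ ((f p : ℝ) * δ) := by
        congr 1
        rw [mul_comm]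
        exact Finset.prod_sdiff hSP
    _ ≤ K ^ T * ∏ p ∈ P, (p:ℝ) ^ ((f p : ℝ) * δ) := by
        apply mul_le_mul_of_nonneg_right hKS (le_of_lt (hprodpos P (subset_refl P)))
    _ = K ^ T * (n:ℝ) ^ δ := by rw [hnd]

def Sqfull (n : ℕ) : Prop := ∀ p : ℕ, p.Prime → p ∣ n → p ^ 2 ∣ n

noncomputable instance : DecidablePred Sqfull := fun _ => Classical.propDecidable _

lemma sqfull_decomp {n : ℕ} (hn0 : n ≠ 0) (h : Sqfull n) :
    ∃ a b : ℕ, 0 < a ∧ 0 < b ∧ n = a ^ 2 * b ^ 3 := by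
  classical
  set f := n.factorization with hf
  set P := n.primeFactors with hP
  have hfge : ∀ p ∈ P, 2 ≤ f p := by
    intro p hp
    have pp := Nat.prime_of_mem_primeFactors hp
    have hdvd : p ∣ n := Nat.dvd_of_mem_primeFactors hp
    have := h p pp hdvd
    exact (Nat.Prime.pow_dvd_iff_le_factorization pp hn0).mp this
  refine ⟨∏ p ∈ P, p ^ ((f p - if Odd (f p) then 3 else 0) / 2),
          ∏ p ∈ P, p ^ (if Odd (f p) then 1 else 0), ?_, ?_, ?_⟩
  · exact Finset.prod_pos fun p hp => pow_pos (Nat.prime_of_mem_primeFactors hp).pos _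
  · exact Finset.prod_pos fun p hp => pow_pos (Nat.prime_of_mem_primeFactors hp).pos _
  · rw [← Finset.prod_pow, ← Finset.prod_pow, ← Finset.prod_mul_distrib]
    conv_lhs => rw [← Nat.factorization_prod_pow_eq_self hn0,
      Nat.prod_factorization_eq_prod_primeFactors]
    apply Finset.prod_congr rfl
    intro p hp
    simp only [← hf]
    rw [← pow_mul, ← pow_mul, ← pow_add]
    congr 1
    have h2 := hfge p hp
    by_cases ho : Odd (f p)
    · simp only [ho, if_pos]
      obtain ⟨m, hm⟩ := ho
      omega
    · simp only [ho, if_neg, not_false_iff]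
      have he : Even (f p) := Nat.not_odd_iff_even.mp ho
      obtain ⟨m, hm⟩ := he
      omega

lemma sqfull_count {δ : ℝ} (hδ : 0 < δ) :
    ∃ C : ℝ, 1 ≤ C ∧ ∀ M : ℕ, 1 ≤ M →
      ((((Finset.Icc 1 (M * M)).filter Sqfull).card : ℝ)) ≤ C * M * (M : ℝ) ^ δ := by
  classical
  obtain ⟨C, hC1, hC⟩ := divisor_bound hδ
  refine ⟨C, hC1, ?_⟩
  intro M hM
  set N := (Finset.Icc 1 (M * M)).filter Sqfull with hN
  set Q : Finset ((_ : ℕ) × ℕ) := (Finset.Icc 1 M).sigma (fun m => m.divisors) with hQ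
  have hex : ∀ n : ℕ, ∃ ab : ℕ × ℕ, n ∈ N →
      0 < ab.1 ∧ 0 < ab.2 ∧ n = ab.1 ^ 2 * ab.2 ^ 3 := by
    intro n
    by_cases hn : n ∈ N
    · obtain ⟨hn1, hn2⟩ := Finset.mem_filter.mp hn
      have hn0 : n ≠ 0 := by
        have := (Finset.mem_Icc.mp hn1).1; omega
      obtain ⟨a, b, ha, hb, hab⟩ := sqfull_decomp hn0 hn2
      exact ⟨(a, b), fun _ => ⟨ha, hb, hab⟩⟩
    · exact ⟨(1, 1), fun hw => absurd hw hn⟩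
  choose F hF using hex
  have key : ∀ n ∈ N, (F n).1 * (F n).2 ≤ M ∧ 0 < (F n).1 ∧ 0 < (F n).2 := by
    intro n hn
    obtain ⟨ha, hb, hab⟩ := hF n hn
    refine ⟨?_, ha, hb⟩
    obtain ⟨hn1, _⟩ := Finset.mem_filter.mp hn
    have hle : n ≤ M * M := (Finset.mem_Icc.mp hn1).2
    set a := (F n).1; set b := (F n).2
    have h1 : (a * b) * (a * b) ≤ n := by nlinarith
    by_contra hcon
    push_neg at hcon
    nlinarith
  have hcard : N.card ≤ Q.card := by
    apply Finset.card_le_card_of_injOn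
      (fun n => (⟨(F n).1 * (F n).2, (F n).1⟩ : (_ : ℕ) × ℕ))
    · intro n hn
      obtain ⟨hm, ha, hb⟩ := key n hn
      refine Finset.mem_sigma.mpr ⟨Finset.mem_Icc.mpr ⟨Nat.mul_pos ha hb, hm⟩, ?_⟩
      exact Nat.mem_divisors.mpr ⟨Dvd.intro _ rfl, (Nat.mul_pos ha hb).ne'⟩
    · intro n hn n' hn' heq
      obtain ⟨ha, hb, hab⟩ := hF n hn
      obtain ⟨ha', hb', hab'⟩ := hF n' hn'
      simp only [Sigma.mk.inj_iff, heq_eq_eq] at heq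
      obtain ⟨h1, h2⟩ := heq
      have hbb : (F n).2 = (F n').2 := by
        rw [h2] at h1
        exact Nat.eq_of_mul_eq_mul_left ha' h1
      rw [hab, hab', h2, hbb]
  have hQcard : (Q.card : ℝ) ≤ C * M * (M : ℝ) ^ δ := by
    rw [hQ, Finset.card_sigma]
    push_cast
    calc ∑ m ∈ Finset.Icc 1 M, (m.divisors.card : ℝ)
        ≤ ∑ m ∈ Finset.Icc 1 M, C * (M : ℝ) ^ δ := by
          apply Finset.sum_le_sum
          intro m hm
          obtain ⟨hm1, hm2⟩ := Finset.mem_Icc.mp hm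
          calc (m.divisors.card : ℝ) ≤ C * (m : ℝ) ^ δ := hC m hm1
            _ ≤ C * (M : ℝ) ^ δ := by
                apply mul_le_mul_of_nonneg_left _ (by linarith)
                exact Real.rpow_le_rpow (by positivity) (by exact_mod_cast hm2) hδ.le
      _ = (M : ℝ) * (C * (M : ℝ) ^ δ) := by
          rw [Finset.sum_const, Nat.card_Icc]
          simp
      _ = C * M * (M : ℝ) ^ δ := by ring
  calc (N.card : ℝ) ≤ (Q.card : ℝ) := by exact_mod_cast hcard
    _ ≤ C * M * (M : ℝ) ^ δ := hQcard

lemma helper_dvd {ι : Type*} {p : ℕ} {S T : Finset ι} {g : ι → ℕ} {j0 : ι}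
    (hj0 : j0 ∈ S) (h : ∑ j ∈ S, g j = ∑ j ∈ T, g j)
    (hS : ∀ j ∈ S, j ≠ j0 → p ∣ g j) (hT : ∀ j ∈ T, p ∣ g j) : p ∣ g j0 := by
  classical
  have h1 : p ∣ ∑ j ∈ T, g j := Finset.dvd_sum hT
  have h2 : p ∣ ∑ j ∈ S.erase j0, g j :=
    Finset.dvd_sum (fun j hj => hS j (Finset.mem_of_mem_erase hj) (Finset.ne_of_mem_erase hj))
  have h3 : g j0 + ∑ j ∈ S.erase j0, g j = ∑ j ∈ S, g j := Finset.add_sum_erase _ _ hj0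
  have h4 : p ∣ g j0 + ∑ j ∈ S.erase j0, g j := by rw [h3, h]; exact h1
  rw [add_comm] at h4
  exact (Nat.dvd_add_right h2).mp h4

lemma sol_sqfull (k ν : ℕ) (hk : 1 ≤ k) (u : Fin (2 * ν) → ℕ) (hu : ∀ i, 1 ≤ u i)
    (heq : ∑ i ∈ Finset.univ.filter (fun i : Fin (2 * ν) => (i : ℕ) < ν), (1 : ℚ) / (u i : ℚ) ^ k
         = ∑ i ∈ Finset.univ.filter (fun i : Fin (2 * ν) => ¬ (i : ℕ) < ν), (1 : ℚ) / (u i : ℚ) ^ k) :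
    Sqfull (∏ i, u i) := by
  classical
  intro p pp hpn
  by_contra hp2
  set n := ∏ i, u i with hn
  have hn0 : n ≠ 0 := Finset.prod_ne_zero_iff.mpr (fun i _ => by have := hu i; omega)
  obtain ⟨j0, -, hj0⟩ := pp.prime.exists_mem_finset_dvd hpn
  have huniq : ∀ j, j ≠ j0 → ¬ p ∣ u j := by
    intro j hne hdvd
    apply hp2
    have hprod : u j0 * u j ∣ n := by
      rw [hn]
      have hsub : ({j0, j} : Finset (Fin (2 * ν))) ⊆ Finset.univ := Finset.subset_univ _
      have h5 := Finset.prod_dvd_prod_of_subset _ _ u hsub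
      rwa [Finset.prod_pair (fun h => hne h.symm)] at h5
    calc p ^ 2 = p * p := sq p
      _ ∣ u j0 * u j := mul_dvd_mul hj0 hdvd
      _ ∣ n := hprod
  set m : Fin (2 * ν) → ℕ := fun j => ∏ i ∈ Finset.univ.erase j, u i with hm
  have hmul : ∀ j, u j * m j = n := fun j => Finset.mul_prod_erase _ _ (Finset.mem_univ j)
  have hpmj0 : ¬ p ∣ m j0 := by
    intro hd
    obtain ⟨i, hi, hdi⟩ := pp.prime.exists_mem_finset_dvd hd
    exact huniq i (Finset.ne_of_mem_erase hi) hdi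
  have hpmj : ∀ j, j ≠ j0 → p ∣ m j := by
    intro j hne
    have h6 : u j0 ∣ m j :=
      Finset.dvd_prod_of_mem u (Finset.mem_erase.mpr ⟨fun h => hne h.symm, Finset.mem_univ _⟩)
    exact hj0.trans h6
  have key : ∀ i : Fin (2 * ν), ((m i : ℚ)) ^ k = (n : ℚ) ^ k * ((1 : ℚ) / (u i : ℚ) ^ k) := by
    intro i
    have hui : ((u i : ℚ)) ≠ 0 := by
      have := hu i
      exact_mod_cast (by omega : (u i : ℤ) ≠ 0)
    have h7 : ((u i : ℚ)) * (m i : ℚ) = (n : ℚ) := by exact_mod_cast hmul i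
    rw [← h7]
    field_simp
    ring
  have hnatq : ∑ i ∈ Finset.univ.filter (fun i : Fin (2 * ν) => (i : ℕ) < ν), m i ^ k
      = ∑ i ∈ Finset.univ.filter (fun i : Fin (2 * ν) => ¬ (i : ℕ) < ν), m i ^ k := by
    have hq : ((∑ i ∈ Finset.univ.filter (fun i : Fin (2 * ν) => (i : ℕ) < ν), m i ^ k : ℕ) : ℚ)
        = ((∑ i ∈ Finset.univ.filter (fun i : Fin (2 * ν) => ¬ (i : ℕ) < ν), m i ^ k : ℕ) : ℚ) := by
      push_cast
      rw [Finset.sum_congr rfl (fun i _ => key i), Finset.sum_congr rfl (fun i _ => key i),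
        ← Finset.mul_sum, ← Finset.mul_sum, heq]
    exact_mod_cast hq
  have hkne : k ≠ 0 := by omega
  have hfinal : p ∣ m j0 ^ k := by
    rcases Nat.lt_or_ge (j0 : ℕ) ν with hcase | hcase
    · refine helper_dvd (g := fun i => m i ^ k) (j0 := j0) (Finset.mem_filter.mpr ⟨Finset.mem_univ j0, hcase⟩) hnatq ?_ ?_
      · exact fun j _ hne => dvd_pow (hpmj j hne) hkne
      · intro j hj
        have hjn : ¬ (j : ℕ) < ν := (Finset.mem_filter.mp hj).2
        refine dvd_pow (hpmj j ?_) hkne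
        intro h; rw [h] at hjn; exact hjn hcase
    · refine helper_dvd (g := fun i => m i ^ k) (j0 := j0) (Finset.mem_filter.mpr ⟨Finset.mem_univ j0, not_lt.mpr hcase⟩) hnatq.symm ?_ ?_
      · exact fun j _ hne => dvd_pow (hpmj j hne) hkne
      · intro j hj
        have hjn : (j : ℕ) < ν := (Finset.mem_filter.mp hj).2
        refine dvd_pow (hpmj j ?_) hkne
        intro h; rw [h] at hjn; omega
  exact hpmj0 (pp.prime.dvd_of_dvd_pow hfinal)

/-- `J_{k,ν}(U) ≤ C U^{ν+ε}`: the number of solutions of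
`∑_{j≤ν} u_j^{-k} = ∑_{j>ν} u_j^{-k}` with `1 ≤ u_i ≤ U`. -/
theorem reciprocal_equation_count (k ν : ℕ) (hk : 2 ≤ k) (hν : 1 ≤ ν) :
    ∀ ε : ℝ, 0 < ε → ∃ C : ℝ, 0 < C ∧ ∀ U : ℕ, 1 ≤ U →
      (Nat.card {u : Fin (2 * ν) → ℕ //
          (∀ i, 1 ≤ u i ∧ u i ≤ U) ∧
          ∑ i ∈ Finset.univ.filter (fun i : Fin (2 * ν) => (i : ℕ) < ν),
              (1 : ℚ) / (u i : ℚ) ^ k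
            = ∑ i ∈ Finset.univ.filter (fun i : Fin (2 * ν) => ¬ (i : ℕ) < ν),
              (1 : ℚ) / (u i : ℚ) ^ k} : ℝ)
        ≤ C * (U : ℝ) ^ ((ν : ℝ) + ε) := by
  intro ε hε
  classical
  set δ : ℝ := ε / (4 * (ν : ℝ) ^ 2 + ν + 1) with hδdef
  have hνR : (0:ℝ) < ν := by exact_mod_cast hν
  have hδ : 0 < δ := by rw [hδdef]; positivity
  obtain ⟨C₁, hC₁1, hC₁⟩ := divisor_bound hδ
  obtain ⟨C₂, hC₂1, hC₂⟩ := sqfull_count hδ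
  refine ⟨C₂ * C₁ ^ (2 * ν), by positivity, ?_⟩
  intro U hU
  set x : ℝ := (U : ℝ) with hxdef
  have hx1 : (1:ℝ) ≤ x := by rw [hxdef]; exact_mod_cast hU
  have hx0 : (0:ℝ) ≤ x := by linarith
  set W : ℕ := U ^ (2 * ν) with hWdef
  set M : ℕ := U ^ ν with hMdef
  have hM1 : 1 ≤ M := Nat.one_le_pow _ _ hU
  have hMM : W = M * M := by rw [hWdef, hMdef, two_mul, pow_add]
  set N := (Finset.Icc 1 W).filter Sqfull with hN
  set F := (Fintype.piFinset fun _ : Fin (2 * ν) => Finset.Icc 1 U).filter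
      (fun u => ∑ i ∈ Finset.univ.filter (fun i : Fin (2 * ν) => (i : ℕ) < ν),
              (1 : ℚ) / (u i : ℚ) ^ k
            = ∑ i ∈ Finset.univ.filter (fun i : Fin (2 * ν) => ¬ (i : ℕ) < ν),
              (1 : ℚ) / (u i : ℚ) ^ k) with hF
  -- Step 1 : Nat.card ≤ F.card
  have step1 : (Nat.card {u : Fin (2 * ν) → ℕ //
          (∀ i, 1 ≤ u i ∧ u i ≤ U) ∧
          ∑ i ∈ Finset.univ.filter (fun i : Fin (2 * ν) => (i : ℕ) < ν),
              (1 : ℚ) / (u i : ℚ) ^ k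
            = ∑ i ∈ Finset.univ.filter (fun i : Fin (2 * ν) => ¬ (i : ℕ) < ν),
              (1 : ℚ) / (u i : ℚ) ^ k}) ≤ F.card := by
    rw [← Nat.card_eq_finsetCard F]
    apply Nat.card_le_card_of_injective
      (fun y => (⟨y.1, by
        rw [hF, Finset.mem_filter]
        refine ⟨Fintype.mem_piFinset.mpr fun i => Finset.mem_Icc.mpr ⟨(y.2.1 i).1, (y.2.1 i).2⟩, y.2.2⟩⟩ :
        {z // z ∈ F}))
    intro a b hab
    exact Subtype.ext (congrArg (Subtype.val : {z // z ∈ F} → (Fin (2 * ν) → ℕ)) hab)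
  -- Step 2 : fiberwise count
  have hmemN : ∀ u ∈ F, (∏ i, u i) ∈ N := by
    intro u huF
    obtain ⟨hpi, heqn⟩ := Finset.mem_filter.mp huF
    have hub : ∀ i, 1 ≤ u i ∧ u i ≤ U := fun i => Finset.mem_Icc.mp (Fintype.mem_piFinset.mp hpi i)
    refine Finset.mem_filter.mpr ⟨Finset.mem_Icc.mpr ⟨?_, ?_⟩, ?_⟩
    · exact Finset.one_le_prod' fun i _ => (hub i).1
    · calc ∏ i, u i ≤ U ^ (Finset.univ : Finset (Fin (2*ν))).card :=
            Finset.prod_le_pow_card _ _ _ fun i _ => (hub i).2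
        _ = W := by rw [Finset.card_univ, Fintype.card_fin, hWdef]
    · exact sol_sqfull k ν (Nat.one_le_of_lt hk) u (fun i => (hub i).1) heqn
  have step2 : F.card ≤ ∑ n ∈ N, n.divisors.card ^ (2 * ν) := by
    rw [Finset.card_eq_sum_card_fiberwise hmemN]
    apply Finset.sum_le_sum
    intro n hn
    have hn0 : n ≠ 0 := by
      exact Nat.one_le_iff_ne_zero.mp (Finset.mem_Icc.mp (Finset.mem_filter.mp hn).1).1
    calc (F.filter fun u => ∏ i, u i = n).card
        ≤ (Fintype.piFinset fun _ : Fin (2 * ν) => n.divisors).card := by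
          apply Finset.card_le_card
          intro u hu
          obtain ⟨-, hprod⟩ := Finset.mem_filter.mp hu
          refine Fintype.mem_piFinset.mpr fun i => Nat.mem_divisors.mpr ⟨?_, hn0⟩
          rw [← hprod]
          exact Finset.dvd_prod_of_mem u (Finset.mem_univ i)
      _ = ∏ _i : Fin (2 * ν), n.divisors.card := Fintype.card_piFinset _
      _ = n.divisors.card ^ (2 * ν) := by
          rw [Finset.prod_const, Finset.card_univ, Fintype.card_fin]
  -- Step 3 : real estimates
  have hWpos : 1 ≤ W := Nat.one_le_pow _ _ hU
  have hdN : ∀ n ∈ N, ((n.divisors.card : ℝ)) ≤ C₁ * (W : ℝ) ^ δ := by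
    intro n hn
    obtain ⟨hn1, hn2⟩ := Finset.mem_Icc.mp (Finset.mem_filter.mp hn).1
    calc ((n.divisors.card : ℝ)) ≤ C₁ * (n : ℝ) ^ δ := hC₁ n hn1
      _ ≤ C₁ * (W : ℝ) ^ δ := by
          apply mul_le_mul_of_nonneg_left _ (by linarith)
          exact Real.rpow_le_rpow (by positivity) (by exact_mod_cast hn2) hδ.le
  have step3 : ((∑ n ∈ N, n.divisors.card ^ (2 * ν) : ℕ) : ℝ)
      ≤ (N.card : ℝ) * (C₁ * (W : ℝ) ^ δ) ^ (2 * ν) := by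
    push_cast
    calc ∑ n ∈ N, ((n.divisors.card : ℝ)) ^ (2 * ν)
        ≤ ∑ _n ∈ N, (C₁ * (W : ℝ) ^ δ) ^ (2 * ν) := by
          apply Finset.sum_le_sum
          intro n hn
          exact pow_le_pow_left₀ (by positivity) (hdN n hn) _
      _ = (N.card : ℝ) * (C₁ * (W : ℝ) ^ δ) ^ (2 * ν) := by
          rw [Finset.sum_const, nsmul_eq_mul]
  have step4 : (N.card : ℝ) ≤ C₂ * M * (M : ℝ) ^ δ := by
    rw [hN, hMM]
    exact hC₂ M hM1
  -- Step 5 : rpow algebra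
  have e1 : (M : ℝ) = x ^ ((ν : ℕ) : ℝ) := by
    rw [Real.rpow_natCast, hMdef]; push_cast; rfl
  have e2 : (W : ℝ) = x ^ (((2 * ν) : ℕ) : ℝ) := by
    rw [Real.rpow_natCast, hWdef]; push_cast; rfl
  have e3 : (M : ℝ) ^ δ = x ^ ((ν : ℝ) * δ) := by
    rw [e1, ← Real.rpow_mul hx0]
  have e4 : ((W : ℝ) ^ δ) ^ (2 * ν) = x ^ ((((2 * ν) : ℕ) : ℝ) * δ * (((2 * ν) : ℕ) : ℝ)) := by
    rw [e2, ← Real.rpow_mul hx0, ← Real.rpow_natCast (x ^ ((((2 * ν) : ℕ) : ℝ) * δ)) (2 * ν),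
      ← Real.rpow_mul hx0]
  have hexp : (ν : ℝ) + (ν : ℝ) * δ + (((2 * ν) : ℕ) : ℝ) * δ * (((2 * ν) : ℕ) : ℝ)
      ≤ (ν : ℝ) + ε := by
    have h2ν : (((2 * ν) : ℕ) : ℝ) = 2 * (ν : ℝ) := by push_cast; ring
    rw [h2ν]
    have : δ * (4 * (ν : ℝ) ^ 2 + ν + 1) = ε := by
      rw [hδdef]; field_simp
    nlinarith [hδ.le]
  have step5 : (M : ℝ) * ((M : ℝ) ^ δ * ((W : ℝ) ^ δ) ^ (2 * ν)) ≤ x ^ ((ν : ℝ) + ε) := by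
    rw [e3, e4, e1, ← Real.rpow_add (by linarith : (0:ℝ) < x), ← Real.rpow_add (by linarith : (0:ℝ) < x)]
    apply Real.rpow_le_rpow_of_exponent_le hx1
    push_cast at hexp ⊢
    linarith
  -- Assemble
  have hC₁pow : (0:ℝ) ≤ (C₁ * (W : ℝ) ^ δ) ^ (2 * ν) := by positivity
  calc (Nat.card _ : ℝ) ≤ (F.card : ℝ) := by exact_mod_cast step1
    _ ≤ ((∑ n ∈ N, n.divisors.card ^ (2 * ν) : ℕ) : ℝ) := by exact_mod_cast step2
    _ ≤ (N.card : ℝ) * (C₁ * (W : ℝ) ^ δ) ^ (2 * ν) := step3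
    _ ≤ (C₂ * M * (M : ℝ) ^ δ) * (C₁ * (W : ℝ) ^ δ) ^ (2 * ν) := by
        apply mul_le_mul_of_nonneg_right step4 hC₁pow
    _ = (C₂ * C₁ ^ (2 * ν)) * ((M : ℝ) * ((M : ℝ) ^ δ * ((W : ℝ) ^ δ) ^ (2 * ν))) := by
        rw [mul_pow]; ring
    _ ≤ (C₂ * C₁ ^ (2 * ν)) * x ^ ((ν : ℝ) + ε) := by
        apply mul_le_mul_of_nonneg_left step5 (by positivity)
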